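/- In a MTL algebra (residuated lattice satisfying (x → y) ∨ (y → x) = 1), a collection Π of prime filters is {1}-closed (for distinct P1, P2 ∈ Π there exist a1 ∉ P1, a2 ∉ P2 with a1 ∨ a2 = 1) if and only if Π is an antichain. -/
import Mathlib


universe u

class ResiduatedLattice (A : Type u) extends Lattice A, BoundedOrder A where
  mul : A → A → A
  himp : A → A → A
  mul_comm : ∀ x y : A, mul x y = mul y x
  mul_assoc : ∀ x y z : A, mul (mul x y) z = mul x (mul y z)
  mul_top : ∀ x : A, mul x ⊤ = x
  adjoint : ∀ x y z : A, mul x y ≤ z ↔ x ≤ himp y z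

namespace RL

variable {A : Type u} [ResiduatedLattice A]

/-- A filter: a nonempty subset closed under the monoid operation `⊙` and closed
under joins with arbitrary elements. -/
def IsFilter (F : Set A) : Prop :=
  F.Nonempty ∧ (∀ x ∈ F, ∀ y ∈ F, ResiduatedLattice.mul x y ∈ F) ∧
    (∀ x ∈ F, ∀ y : A, x ⊔ y ∈ F)

/-- A prime filter: a proper filter such that `x ⊔ y ∈ P` implies `x ∈ P` or `y ∈ P`. -/
def IsPrime (P : Set A) : Prop :=
  IsFilter P ∧ P ≠ Set.univ ∧ ∀ x y : A, x ⊔ y ∈ P → x ∈ P ∨ y ∈ P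

/-- The filter generated by a subset `X`. -/
def Fgen (X : Set A) : Set A := ⋂₀ {G : Set A | IsFilter G ∧ X ⊆ G}

/-- An `X`-minimal prime filter: a minimal element of the set of prime filters containing `X`. -/
def MinPrimeOver (X : Set A) (P : Set A) : Prop :=
  IsPrime P ∧ X ⊆ P ∧ ∀ Q : Set A, IsPrime Q → X ⊆ Q → Q ⊆ P → Q = P

/-- A minimal prime filter. -/
def MinPrime (P : Set A) : Prop :=
  IsPrime P ∧ ∀ Q : Set A, IsPrime Q → Q ⊆ P → Q = P

/-- The coannihilator of `X` belonging to `F`. -/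
def coann (F : Set A) (X : Set A) : Set A := {a : A | ∀ x ∈ X, x ⊔ a ∈ F}

/-- `X^⊥ = {a | x ⊔ a = ⊤ for all x ∈ X}`. -/
def perp (X : Set A) : Set A := {a : A | ∀ x ∈ X, x ⊔ a = ⊤}

/-- `D_F(P) = {a | (F : a) ⊄ P}`. -/
def DF (F P : Set A) : Set A := {a : A | ¬ coann F {a} ⊆ P}

/-- A `∨`-closed subset: nonempty and closed under joins. -/
def VClosed (C : Set A) : Prop := C.Nonempty ∧ ∀ x ∈ C, ∀ y ∈ C, x ⊔ y ∈ C

end RL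


lemma filter_up {A : Type u} [ResiduatedLattice A] {F : Set A} (hF : RL.IsFilter F)
    {a b : A} (ha : a ∈ F) (h : a ≤ b) : b ∈ F := by
  have := hF.2.2 a ha b
  rwa [sup_eq_right.mpr h] at this

lemma filter_top {A : Type u} [ResiduatedLattice A] {F : Set A} (hF : RL.IsFilter F) :
    (⊤ : A) ∈ F := by
  obtain ⟨x, hx⟩ := hF.1
  exact filter_up hF hx le_top

theorem mtl_one_closed_iff_antichain {A : Type u} [ResiduatedLattice A]
    (hpl : ∀ x y : A, ResiduatedLattice.himp x y ⊔ ResiduatedLattice.himp y x = ⊤)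
    (𝔓 : Set (Set A)) (h𝔓 : ∀ P ∈ 𝔓, RL.IsPrime P) :
    (∀ P1 ∈ 𝔓, ∀ P2 ∈ 𝔓, P1 ≠ P2 → ∃ a1 ∉ P1, ∃ a2 ∉ P2, a1 ⊔ a2 = (⊤ : A)) ↔
      IsAntichain (· ⊆ ·) 𝔓 := by
  constructor
  · intro h P1 hP1 P2 hP2 hne hsub
    obtain ⟨a1, ha1, a2, ha2, hsup⟩ := h P1 hP1 P2 hP2 hne
    have htop : (⊤ : A) ∈ P1 := filter_top (h𝔓 P1 hP1).1
    rcases (h𝔓 P1 hP1).2.2 a1 a2 (hsup ▸ htop) with h1 | h2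
    · exact ha1 h1
    · exact ha2 (hsub h2)
  · intro hac P1 hP1 P2 hP2 hne
    obtain ⟨x, hx1, hx2⟩ := Set.not_subset.mp (hac hP1 hP2 hne)
    obtain ⟨y, hy2, hy1⟩ := Set.not_subset.mp (hac hP2 hP1 (Ne.symm hne))
    refine ⟨ResiduatedLattice.himp x y, ?_, ResiduatedLattice.himp y x, ?_, hpl x y⟩
    · intro hmem
      have hle : ResiduatedLattice.mul (ResiduatedLattice.himp x y) x ≤ y :=
        (ResiduatedLattice.adjoint _ _ _).mpr le_rfl
      exact hy1 (filter_up (h𝔓 P1 hP1).1 ((h𝔓 P1 hP1).1.2.1 _ hmem _ hx1) hle)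
    · intro hmem
      have hle : ResiduatedLattice.mul (ResiduatedLattice.himp y x) y ≤ x :=
        (ResiduatedLattice.adjoint _ _ _).mpr le_rfl
      exact hx2 (filter_up (h𝔓 P2 hP2).1 ((h𝔓 P2 hP2).1.2.1 _ hmem _ hy2) hle)
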